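/- arXiv:2207.05308 — 6 statements merged into one kernel-verified Lean document; each statement's English description precedes it below -/
import Mathlib

section
/- For any real numbers a < b and any parameter ρ ∈ ℝ, the binary relation ⪯_ρ on [a,b], defined by x ⪯_ρ y iff (x = y) or (x < y and B(x,y) < ρ) or (y < x and ρ ≤ B(y,x)), is a total order (reflexive, antisymmetric, transitive, and total) on [a,b]. -/
/-- The interior-division point `B(u,v)` of the segment `[u,v] ⊆ [a,b]`. -/
noncomputable def B (a b u v : ℝ) : ℝ := (b * v - a * u) / (b - a + v - u)

/-- The binary relation `⪯_ρ` on `[a,b]`. -/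
def rel (a b ρ x y : ℝ) : Prop :=
  x = y ∨ (x < y ∧ B a b x y < ρ) ∨ (y < x ∧ ρ ≤ B a b y x)

lemma B_mono_left (a b u u' v : ℝ) (hab : a < b) (ha : a ≤ u) (h1 : u < u') (h2 : u' < v)
    (hb : v ≤ b) : B a b u v < B a b u' v := by
  have d1 : (0:ℝ) < b - a + v - u := by linarith
  have d2 : (0:ℝ) < b - a + v - u' := by linarith
  rw [B, B, div_lt_div_iff₀ d1 d2]
  nlinarith [mul_pos (mul_pos (sub_pos.2 h1) (sub_pos.2 hab)) (show (0:ℝ) < v - a by linarith)]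

lemma B_mono_right (a b u v v' : ℝ) (hab : a < b) (ha : a ≤ u) (h1 : u < v) (h2 : v < v')
    (hb : v' ≤ b) : B a b u v < B a b u v' := by
  have d1 : (0:ℝ) < b - a + v - u := by linarith
  have d2 : (0:ℝ) < b - a + v' - u := by linarith
  rw [B, B, div_lt_div_iff₀ d1 d2]
  nlinarith [mul_pos (mul_pos (sub_pos.2 h2) (sub_pos.2 hab)) (show (0:ℝ) < b - u by linarith)]

theorem stmt_2 (a b ρ : ℝ) (hab : a < b) :
    (∀ x ∈ Set.Icc a b, rel a b ρ x x) ∧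
    (∀ x ∈ Set.Icc a b, ∀ y ∈ Set.Icc a b,
        rel a b ρ x y → rel a b ρ y x → x = y) ∧
    (∀ x ∈ Set.Icc a b, ∀ y ∈ Set.Icc a b, ∀ z ∈ Set.Icc a b,
        rel a b ρ x y → rel a b ρ y z → rel a b ρ x z) ∧
    (∀ x ∈ Set.Icc a b, ∀ y ∈ Set.Icc a b, rel a b ρ x y ∨ rel a b ρ y x) := by
  refine ⟨fun x _ => Or.inl rfl, ?_, ?_, ?_⟩
  · rintro x _ y _ (rfl | ⟨hxy, h1⟩ | ⟨hyx, h1⟩) (h2 | ⟨h2, h3⟩ | ⟨h2, h3⟩) <;>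
      first | rfl | exact h2.symm | linarith
  · rintro x hx y hy z hz (rfl | ⟨hxy, h1⟩ | ⟨hyx, h1⟩) h2
    · exact h2
    · rcases h2 with rfl | ⟨hyz, h3⟩ | ⟨hzy, h3⟩
      · exact Or.inr (Or.inl ⟨hxy, h1⟩)
      · -- x < y < z
        refine Or.inr (Or.inl ⟨lt_trans hxy hyz, ?_⟩)
        have := B_mono_left a b x y z hab hx.1 hxy hyz hz.2
        linarith
      · -- x < y, z < y
        rcases lt_trichotomy x z with h | rfl | h
        · -- x < z < y : B x z < B x y < ρ
          refine Or.inr (Or.inl ⟨h, ?_⟩)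
          have := B_mono_right a b x z y hab hx.1 h hzy hy.2
          linarith
        · exact Or.inl rfl
        · -- z < x < y : contradiction since B z y < B x y < ρ ≤ B z y
          exfalso
          have := B_mono_left a b z x y hab hz.1 h hxy hy.2
          linarith
    · rcases h2 with rfl | ⟨hyz, h3⟩ | ⟨hzy, h3⟩
      · exact Or.inr (Or.inr ⟨hyx, h1⟩)
      · -- y < x, y < z
        rcases lt_trichotomy x z with h | rfl | h
        · -- y < x < z : B y x < B y z < ρ, but ρ ≤ B y x, contra? no:
          -- B y x < B y z (mono right), B y z < ρ, ρ ≤ B y x : contradiction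
          exfalso
          have := B_mono_right a b y x z hab hy.1 hyx h hz.2
          linarith
        · exfalso; linarith
        · -- y < z < x : ρ ≤ B y x < B z x
          refine Or.inr (Or.inr ⟨h, ?_⟩)
          have := B_mono_left a b y z x hab hy.1 hyz h hx.2
          linarith
      · -- z < y < x : ρ ≤ B z y < B z x
        refine Or.inr (Or.inr ⟨lt_trans hzy hyx, ?_⟩)
        have := B_mono_right a b z y x hab hz.1 hzy hyx hx.2
        linarith
  · intro x _ y _
    rcases lt_trichotomy x y with h | rfl | h
    · rcases lt_or_ge (B a b x y) ρ with h' | h'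
      · exact Or.inl (Or.inr (Or.inl ⟨h, h'⟩))
      · exact Or.inr (Or.inr (Or.inr ⟨h, h'⟩))
    · exact Or.inl (Or.inl rfl)
    · rcases lt_or_ge (B a b y x) ρ with h' | h'
      · exact Or.inr (Or.inr (Or.inl ⟨h, h'⟩))
      · exact Or.inl (Or.inr (Or.inr ⟨h, h'⟩))
end

section
/- Let T̃: t₁ → ⋯ → t_{2m} → t₁ be a cyclic sequence of 2m distinct reals in which every point is a turning point (i.e., alternately local maxima and minima along the cycle), with m ≥ 2. Then there exists an index i (cyclically) such that the path tᵢ → t_{i+1} → t_{i+2} → t_{i+3} is a detour, meaning tᵢ ≤ t_{i+2} < t_{i+1} ≤ t_{i+3} or tᵢ ≥ t_{i+2} > t_{i+1} ≥ t_{i+3} (indices mod 2m). -/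
/-- `i` is a turning point of the cyclic tour `t` (a strict local extremum). -/
def turning (t : ℤ → ℝ) (i : ℤ) : Prop :=
  ¬(t (i - 1) < t i ∧ t i < t (i + 1)) ∧ ¬(t (i + 1) < t i ∧ t i < t (i - 1))

/-- Any contracted tour (a cyclic sequence of `2m` distinct reals, `m ≥ 2`, all
of whose points are turning points) contains a detour
`tᵢ → t_{i+1} → t_{i+2} → t_{i+3}`. -/
theorem stmt_6 (m : ℕ) (hm : 2 ≤ m) (t : ℤ → ℝ)
    (hper : ∀ i, t (i + 2 * (m : ℤ)) = t i)
    (hinj : ∀ i j, 0 ≤ i → i < 2 * (m : ℤ) → 0 ≤ j → j < 2 * (m : ℤ) →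
      t i = t j → i = j)
    (hturn : ∀ i, turning t i) :
    ∃ i : ℤ,
      (t i ≤ t (i + 2) ∧ t (i + 2) < t (i + 1) ∧ t (i + 1) ≤ t (i + 3)) ∨
      (t (i + 3) ≤ t (i + 1) ∧ t (i + 1) < t (i + 2) ∧ t (i + 2) ≤ t i) := by
  classical
  set n : ℤ := 2 * (m : ℤ) with hn
  have hn4 : (4 : ℤ) ≤ n := by simp [hn]; omega
  have hn0 : (0 : ℤ) < n := by omega
  have hp : Function.Periodic t n := hper
  -- reduction mod n
  have hmod : ∀ i : ℤ, t (i % n) = t i := by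
    intro i
    have h := hp.sub_int_mul_eq (x := i) (i / n)
    simp only [Int.cast_id] at h
    rwa [show i - (i / n) * n = i % n by rw [Int.emod_def]; ring] at h
  have heq : ∀ i j : ℤ, i % n = j % n → t i = t j := by
    intro i j h
    rw [← hmod i, ← hmod j, h]
  have hshift : ∀ i d : ℤ, (i % n + d) % n = (i + d) % n := by
    intro i d
    have h1 : i % n + d = i + d + n * (-(i / n)) := by rw [Int.emod_def]; ring
    rw [h1, Int.add_mul_emod_self_left]
  have hne : ∀ i j : ℤ, i % n ≠ j % n → t i ≠ t j := by
    intro i j h hij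
    apply h
    have := hinj (i % n) (j % n) (Int.emod_nonneg i (by omega))
      (by have := Int.emod_lt_of_pos i hn0; omega)
      (Int.emod_nonneg j (by omega))
      (by have := Int.emod_lt_of_pos j hn0; omega)
      (by rw [hmod, hmod]; exact hij)
    exact this
  have hadj : ∀ i : ℤ, t i ≠ t (i + 1) := by
    intro i
    apply hne
    intro h
    have hd : ((i : ℤ) - (i + 1)) % n = 0 := by
      rw [Int.sub_emod, h, sub_self, Int.zero_emod]
    have : n ∣ (i - (i + 1)) := Int.dvd_of_emod_eq_zero hd
    have : n ∣ 1 := by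
      have h1 : i - (i + 1) = -1 := by ring
      rw [h1] at this
      exact (dvd_neg).mp this
    have := Int.le_of_dvd (by norm_num) this
    omega
  -- strict alternation
  have alt : ∀ i : ℤ, (t (i - 1) < t i ∧ t (i + 1) < t i) ∨
      (t i < t (i - 1) ∧ t i < t (i + 1)) := by
    intro i
    obtain ⟨h1, h2⟩ := hturn i
    have hl : t (i - 1) ≠ t i := by
      have := hadj (i - 1)
      simpa using this
    have hr : t i ≠ t (i + 1) := hadj i
    rcases lt_or_gt_of_ne hl with hL | hL <;> rcases lt_or_gt_of_ne hr with hR | hR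
    · exact absurd ⟨hL, hR⟩ h1
    · left; exact ⟨hL, hR⟩
    · right; exact ⟨hL, hR⟩
    · exact absurd ⟨hR, hL⟩ h2
  set maxAt : ℤ → Prop := fun i => t (i - 1) < t i ∧ t (i + 1) < t i with hmaxAt
  -- maxAt is invariant under mod n
  have hmaxmod : ∀ k : ℤ, maxAt k → maxAt (k % n) := by
    intro k hk
    refine ⟨?_, ?_⟩
    · rw [heq (k % n - 1) (k - 1) (by
        have := hshift k (-1); rw [show k % n + -1 = k % n - 1 by ring,
          show k + -1 = k - 1 by ring] at this; exact this),
        hmod k]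
      exact hk.1
    · rw [heq (k % n + 1) (k + 1) (hshift k 1), hmod k]
      exact hk.2
  -- find minimal local maximum
  have hex : ∃ j, j ∈ (Finset.Icc (0:ℤ) (n-1)).filter maxAt := by
    rcases alt 0 with h0 | h0
    · exact ⟨0, Finset.mem_filter.mpr ⟨Finset.mem_Icc.mpr ⟨le_refl _, by omega⟩, h0⟩⟩
    · rcases alt 1 with h1 | h1
      · exact ⟨1, Finset.mem_filter.mpr ⟨Finset.mem_Icc.mpr ⟨by norm_num, by omega⟩, h1⟩⟩
      · exfalso
        have := h1.1
        simp only [show (1:ℤ) - 1 = 0 by ring] at this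
        have := h0.2
        simp only [show (0:ℤ) + 1 = 1 by ring] at this
        linarith
  obtain ⟨j, hjS, hjmin⟩ := Finset.exists_min_image _ t hex
  have hjmax : maxAt j := (Finset.mem_filter.mp hjS).2
  -- every local max has value ≥ t j
  have hge : ∀ k : ℤ, maxAt k → t j ≤ t k := by
    intro k hk
    have hkm : maxAt (k % n) := hmaxmod k hk
    have hmem : k % n ∈ (Finset.Icc (0:ℤ) (n-1)).filter maxAt := by
      refine Finset.mem_filter.mpr ⟨Finset.mem_Icc.mpr ⟨Int.emod_nonneg k (by omega), ?_⟩, hkm⟩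
      have := Int.emod_lt_of_pos k hn0; omega
    have := hjmin _ hmem
    rwa [hmod k] at this
  -- j+1 is a local min, j+2 a local max
  have hj1 : t (j + 1) < t (j + 2) := by
    rcases alt (j + 1) with h | h
    · exfalso
      have := h.1
      simp only [show j + 1 - 1 = j by ring] at this
      linarith [hjmax.2]
    · have := h.2
      simpa [show j + 1 + 1 = j + 2 by ring] using this
  have hj2max : maxAt (j + 2) := by
    rcases alt (j + 2) with h | h
    · exact h
    · exfalso
      have := h.1
      simp only [show j + 2 - 1 = j + 1 by ring] at this
      linarith
  -- j-1 is a local min, j-2 a local max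
  have hjm1 : t (j - 1) < t (j - 2) := by
    rcases alt (j - 1) with h | h
    · exfalso
      have := h.2
      simp only [show j - 1 + 1 = j by ring] at this
      linarith [hjmax.1]
    · have := h.1
      simpa [show j - 1 - 1 = j - 2 by ring] using this
  have hjm2max : maxAt (j - 2) := by
    rcases alt (j - 2) with h | h
    · exact h
    · exfalso
      have := h.2
      simp only [show j - 2 + 1 = j - 1 by ring] at this
      linarith
  have hge2 : t j ≤ t (j + 2) := hge _ hj2max
  have hgem2 : t j ≤ t (j - 2) := hge _ hjm2max
  by_cases hcase : t (j - 1) ≤ t (j + 1)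
  · refine ⟨j - 1, Or.inl ?_⟩
    simp only [show j - 1 + 2 = j + 1 by ring, show j - 1 + 1 = j by ring,
      show j - 1 + 3 = j + 2 by ring]
    exact ⟨hcase, hjmax.2, hge2⟩
  · refine ⟨j - 2, Or.inr ?_⟩
    simp only [show j - 2 + 3 = j + 1 by ring, show j - 2 + 1 = j - 1 by ring,
      show j - 2 + 2 = j by ring]
    exact ⟨le_of_lt (not_le.mp hcase), hjmax.1, hgem2⟩
end

section
/- Let T̃: t₁ → ⋯ → t_{2m} → t₁ be a contracted tour on 2m distinct turning points. Then |cf(T̃)| ≥ m, where cf(T̃) is the set of conflicting pairs (tᵢ, tⱼ) with tᵢ ≤ t_{j+1} < t_{i+1} ≤ tⱼ (indices cyclic). -/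
/-- The pair `(i, j)` is conflicting in the cyclic tour `t`:
`tᵢ ≤ t_{j+1} < t_{i+1} ≤ tⱼ`. -/
def conflicting (t : ℤ → ℝ) (i j : ℤ) : Prop :=
  t i ≤ t (j + 1) ∧ t (j + 1) < t (i + 1) ∧ t (i + 1) ≤ t j

open Classical in
noncomputable def cfs (t : ℤ → ℝ) (n : ℤ) : Finset (ℤ × ℤ) :=
  (Finset.Ico 0 n ×ˢ Finset.Ico 0 n).filter (fun p => conflicting t p.1 p.2)

lemma mem_cfs {t : ℤ → ℝ} {n : ℤ} {p : ℤ × ℤ} :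
    p ∈ cfs t n ↔ (0 ≤ p.1 ∧ p.1 < n) ∧ (0 ≤ p.2 ∧ p.2 < n) ∧ conflicting t p.1 p.2 := by
  simp [cfs, Finset.mem_filter, Finset.mem_product, Finset.mem_Ico, and_assoc]

structure Tour (t : ℤ → ℝ) (n : ℤ) : Prop where
  pos : 2 ≤ n
  per : ∀ i, t (i + n) = t i
  inj : ∀ i j, 0 ≤ i → i < n → 0 ≤ j → j < n → t i = t j → i = j
  turn : ∀ i, turning t i

namespace Tour
variable {t : ℤ → ℝ} {n : ℤ}

lemma npos (h : Tour t n) : 0 < n := by have := h.pos; omega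

lemma tmod (h : Tour t n) (a : ℤ) : t a = t (a % n) := by
  have hp : Function.Periodic t n := h.per
  have heq := hp.sub_int_mul_eq (x := a) (a / n)
  rw [Int.emod_def, show n * (a / n) = (a / n) * n by ring]
  exact heq.symm

lemma tcong (h : Tour t n) {a b : ℤ} (hab : a % n = b % n) : t a = t b := by
  rw [h.tmod a, h.tmod b, hab]

lemma tmodinj (h : Tour t n) {a b : ℤ} (hab : t a = t b) : a % n = b % n := by
  have hn := h.npos
  apply h.inj _ _ (Int.emod_nonneg a hn.ne') (Int.emod_lt_of_pos a hn)
    (Int.emod_nonneg b hn.ne') (Int.emod_lt_of_pos b hn)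
  rw [← h.tmod a, ← h.tmod b]; exact hab

lemma tdvd (h : Tour t n) {a b : ℤ} (hab : t a = t b) : n ∣ a - b :=
  Int.dvd_of_emod_eq_zero (Int.emod_eq_emod_iff_emod_sub_eq_zero.mp (h.tmodinj hab))

lemma tne (h : Tour t n) {a b : ℤ} (hne : a ≠ b) (h1 : -n < a - b) (h2 : a - b < n) :
    t a ≠ t b := by
  intro hab
  obtain ⟨k, hk⟩ := h.tdvd hab
  have hn := h.npos
  have hk0 : k = 0 := by
    by_contra hk0
    rcases lt_or_gt_of_ne hk0 with h' | h'
    · nlinarith [hk ▸ h1]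
    · nlinarith [hk ▸ h2]
  rw [hk0, mul_zero] at hk
  omega

lemma step_up (h : Tour t n) {i : ℤ} (hup : t i < t (i + 1)) : t (i + 2) < t (i + 1) := by
  have hn := h.pos
  have h1 := (h.turn (i + 1)).1
  rw [show i + 1 - 1 = i by ring, show i + 1 + 1 = i + 2 by ring] at h1
  exact lt_of_le_of_ne (not_lt.mp fun hc => h1 ⟨hup, hc⟩)
    (h.tne (by omega) (by omega) (by omega))

lemma step_down (h : Tour t n) {i : ℤ} (hdn : t (i + 1) < t i) : t (i + 1) < t (i + 2) := by
  have hn := h.pos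
  have h1 := (h.turn (i + 1)).2
  rw [show i + 1 - 1 = i by ring, show i + 1 + 1 = i + 2 by ring] at h1
  exact lt_of_le_of_ne (not_lt.mp fun hc => h1 ⟨hc, hdn⟩)
    (h.tne (by omega) (by omega) (by omega))

lemma max_left (h : Tour t n) {i : ℤ} (hdn : t (i + 1) < t i) : t (i - 1) < t i := by
  have hn := h.pos
  have h1 := (h.turn i).2
  exact lt_of_le_of_ne (not_lt.mp fun hc => h1 ⟨hdn, hc⟩)
    (h.tne (by omega) (by omega) (by omega))

lemma min_left (h : Tour t n) {i : ℤ} (hup : t i < t (i + 1)) : t i < t (i - 1) := by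
  have hn := h.pos
  have h1 := (h.turn i).1
  exact lt_of_le_of_ne (not_lt.mp fun hc => h1 ⟨hc, hup⟩) (h.tne (by omega) (by omega) (by omega))

lemma alt (h : Tour t n) (i : ℤ) : t i < t (i + 1) ∨ t (i + 1) < t i := by
  have hn := h.pos
  have := h.tne (a := i) (b := i + 1) (by omega) (by omega) (by omega)
  rcases lt_or_gt_of_ne this with h' | h'
  · exact Or.inl h'
  · exact Or.inr h'

lemma shift (h : Tour t n) (s : ℤ) : Tour (fun i => t (i + s)) n := by
  refine ⟨h.pos, fun i => ?_, fun i j hi1 hi2 hj1 hj2 hij => ?_, fun i => ?_⟩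
  · show t (i + n + s) = t (i + s)
    rw [show i + n + s = (i + s) + n by ring, h.per]
  · obtain ⟨k, hk⟩ := h.tdvd (a := i + s) (b := j + s) hij
    have hn := h.npos
    have hk0 : k = 0 := by
      by_contra hk0
      rcases lt_or_gt_of_ne hk0 with h' | h'
      · nlinarith [hk]
      · nlinarith [hk]
    rw [hk0, mul_zero] at hk; omega
  · have h1 := h.turn (i + s)
    unfold turning at h1 ⊢
    rw [show i + s - 1 = (i - 1) + s by ring, show i + s + 1 = (i + 1) + s by ring] at h1
    exact h1

end Tour
namespace Tour
variable {t : ℤ → ℝ} {n : ℤ}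

lemma emod_shift {w a b : ℤ} (h : a % w = b % w) (c : ℤ) : (a + c) % w = (b + c) % w := by
  rw [← Int.emod_add_emod a w c, ← Int.emod_add_emod b w c, h]

lemma exists_minmax (h : Tour t n) :
    ∃ p, 0 ≤ p ∧ p < n ∧ t (p + 1) < t p ∧ ∀ q, t (q + 1) < t q → t p ≤ t q := by
  classical
  have hn := h.pos
  set M := (Finset.Ico (0:ℤ) n).filter (fun i => t (i + 1) < t i) with hM
  have hne : M.Nonempty := by
    rcases h.alt 0 with hup | hdn
    · refine ⟨1, Finset.mem_filter.mpr ⟨Finset.mem_Ico.mpr ⟨by omega, by omega⟩, ?_⟩⟩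
      have := h.step_up hup
      norm_num at this ⊢
      exact this
    · exact ⟨0, Finset.mem_filter.mpr ⟨Finset.mem_Ico.mpr ⟨le_refl 0, by omega⟩, by norm_num at hdn ⊢; exact hdn⟩⟩
  obtain ⟨p, hpM, hpmin⟩ := M.exists_min_image t hne
  obtain ⟨hpIco, hpd⟩ := Finset.mem_filter.mp hpM
  rw [Finset.mem_Ico] at hpIco
  refine ⟨p, hpIco.1, hpIco.2, hpd, fun q hq => ?_⟩
  have h1 : t (q % n) = t q := (h.tmod q).symm
  have h2 : t (q % n + 1) = t (q + 1) := h.tcong (emod_shift (Int.emod_emod_of_dvd q dvd_rfl) 1)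
  have hqM : q % n ∈ M := Finset.mem_filter.mpr
    ⟨Finset.mem_Ico.mpr ⟨Int.emod_nonneg q h.npos.ne', Int.emod_lt_of_pos q h.npos⟩,
     by rw [h1, h2]; exact hq⟩
  have := hpmin _ hqM
  rwa [h1] at this

lemma cfs_shift_le (h : Tour t n) (s : ℤ) :
    (cfs (fun i => t (i + s)) n).card ≤ (cfs t n).card := by
  have hn := h.npos
  set u : ℤ → ℝ := fun i => t (i + s) with hu
  apply Finset.card_le_card_of_injOn (fun p => ((p.1 + s) % n, (p.2 + s) % n))
  · rintro ⟨i, j⟩ hmem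
    rw [Finset.mem_coe, mem_cfs] at hmem ⊢
    obtain ⟨hi, hj, hc⟩ := hmem
    refine ⟨⟨Int.emod_nonneg _ hn.ne', Int.emod_lt_of_pos _ hn⟩,
      ⟨Int.emod_nonneg _ hn.ne', Int.emod_lt_of_pos _ hn⟩, ?_, ?_, ?_⟩
    · show t ((i + s) % n) ≤ t ((j + s) % n + 1)
      rw [← h.tmod (i + s),
        h.tcong (a := (j + s) % n + 1) (b := j + 1 + s)
          (by rw [Int.emod_add_emod]; ring_nf)]
      exact hc.1
    · show t ((j + s) % n + 1) < t ((i + s) % n + 1)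
      rw [h.tcong (a := (j + s) % n + 1) (b := j + 1 + s)
          (by rw [Int.emod_add_emod]; ring_nf),
        h.tcong (a := (i + s) % n + 1) (b := i + 1 + s)
          (by rw [Int.emod_add_emod]; ring_nf)]
      exact hc.2.1
    · show t ((i + s) % n + 1) ≤ t ((j + s) % n)
      rw [← h.tmod (j + s),
        h.tcong (a := (i + s) % n + 1) (b := i + 1 + s)
          (by rw [Int.emod_add_emod]; ring_nf)]
      exact hc.2.2
  · rintro ⟨i, j⟩ hij ⟨i', j'⟩ hij' heq
    simp only [Finset.coe_filter, Set.mem_setOf_eq, Prod.mk.injEq] at heq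
    rw [Finset.mem_coe, mem_cfs] at hij hij'
    obtain ⟨heq1, heq2⟩ := heq
    have d1 : n ∣ (i + s) - (i' + s) := by
      have := Int.emod_eq_emod_iff_emod_sub_eq_zero.mp heq1
      exact Int.dvd_of_emod_eq_zero this
    have d2 : n ∣ (j + s) - (j' + s) := by
      have := Int.emod_eq_emod_iff_emod_sub_eq_zero.mp heq2
      exact Int.dvd_of_emod_eq_zero this
    obtain ⟨k1, hk1⟩ := d1
    obtain ⟨k2, hk2⟩ := d2
    have e1 : i = i' := by
      have hb1 := hij.1; have hb2 := hij'.1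
      have hk10 : k1 = 0 := by
        by_contra hc
        rcases lt_or_gt_of_ne hc with h' | h' <;> nlinarith
      rw [hk10, mul_zero] at hk1; omega
    have e2 : j = j' := by
      have hb1 := hij.2.1; have hb2 := hij'.2.1
      have hk20 : k2 = 0 := by
        by_contra hc
        rcases lt_or_gt_of_ne hc with h' | h' <;> nlinarith
      rw [hk20, mul_zero] at hk2; omega
    simp [e1, e2]

end Tour
namespace Tour

lemma tour_reduce {u : ℤ → ℝ} {w : ℤ} (h : Tour u (w + 2)) (hw : 2 ≤ w)
    (hb : (u (w - 1) < u 0 ∧ u 1 < u 0 ∧ u (w - 1) < u (w - 2)) ∨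
          (u 0 < u (w - 1) ∧ u 0 < u 1 ∧ u (w - 2) < u (w - 1))) :
    Tour (fun i => u (i % w)) w := by
  classical
  set t' : ℤ → ℝ := fun i => u (i % w) with ht'
  have hv : ∀ a, 0 ≤ a → a < w → t' a = u a := fun a ha hb' => by
    show u (a % w) = u a; rw [Int.emod_eq_of_lt ha hb']
  have hval : ∀ a b : ℤ, a % w = b % w → t' a = t' b := fun a b hab => by
    show u (a % w) = u (b % w); rw [hab]
  have hneg1 : (-1 : ℤ) % w = w - 1 := by
    rw [show (-1 : ℤ) = (w - 1) + w * (-1) by ring, Int.add_mul_emod_self_left,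
      Int.emod_eq_of_lt (by omega) (by omega)]
  have base : ∀ i0, 0 ≤ i0 → i0 < w → turning t' i0 := by
    intro i0 h0 h1
    by_cases hz : i0 = 0
    · subst hz
      have e1 : t' (0 - 1) = u (w - 1) := by
        show u ((0 - 1) % w) = u (w - 1)
        rw [show (0 : ℤ) - 1 = -1 by ring, hneg1]
      have e2 : t' 0 = u 0 := hv 0 le_rfl (by omega)
      have e3 : t' (0 + 1) = u 1 := by rw [show (0 : ℤ) + 1 = 1 by ring]; exact hv 1 (by omega) (by omega)
      unfold turning
      rw [e1, e2, e3]
      rcases hb with ⟨b1, b2, b3⟩ | ⟨b1, b2, b3⟩ <;>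
        exact ⟨fun ⟨x, y⟩ => by linarith, fun ⟨x, y⟩ => by linarith⟩
    by_cases hlast : i0 = w - 1
    · subst hlast
      have e1 : t' (w - 1 - 1) = u (w - 2) := by
        rw [show w - 1 - 1 = w - 2 by ring]; exact hv _ (by omega) (by omega)
      have e2 : t' (w - 1) = u (w - 1) := hv _ (by omega) (by omega)
      have e3 : t' (w - 1 + 1) = u 0 := by
        rw [show w - 1 + 1 = w by ring]
        show u (w % w) = u 0
        rw [Int.emod_self]
      unfold turning
      rw [e1, e2, e3]
      rcases hb with ⟨b1, b2, b3⟩ | ⟨b1, b2, b3⟩ <;>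
        exact ⟨fun ⟨x, y⟩ => by linarith, fun ⟨x, y⟩ => by linarith⟩
    · have e1 : t' (i0 - 1) = u (i0 - 1) := hv _ (by omega) (by omega)
      have e2 : t' i0 = u i0 := hv _ (by omega) (by omega)
      have e3 : t' (i0 + 1) = u (i0 + 1) := hv _ (by omega) (by omega)
      unfold turning
      rw [e1, e2, e3]
      exact h.turn i0
  refine ⟨hw, fun i => ?_, fun i j hi1 hi2 hj1 hj2 hij => ?_, fun i => ?_⟩
  · show u ((i + w) % w) = u (i % w)
    rw [show i + w = i + w * 1 by ring, Int.add_mul_emod_self_left]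
  · rw [hv i hi1 hi2, hv j hj1 hj2] at hij
    exact h.inj i j hi1 (by omega) hj1 (by omega) hij
  · have hw0 : 0 < w := by omega
    have e1 : t' (i - 1) = t' (i % w - 1) := hval _ _ (by
      rw [Int.sub_emod i 1 w, Int.sub_emod (i % w) 1 w, Int.emod_emod_of_dvd _ dvd_rfl])
    have e2 : t' i = t' (i % w) := hval _ _ (Int.emod_emod_of_dvd i dvd_rfl).symm
    have e3 : t' (i + 1) = t' (i % w + 1) := hval _ _ (Int.emod_add_emod i w 1).symm
    have hbase := base (i % w) (Int.emod_nonneg i hw0.ne') (Int.emod_lt_of_pos i hw0)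
    unfold turning at hbase ⊢
    rw [e1, e2, e3]
    exact hbase

end Tour
namespace Tour

lemma reduceA {u : ℤ → ℝ} {w : ℤ} (h : Tour u (w + 2)) (hw : 2 ≤ w)
    (hmax : u (w + 1) < u w)
    (hA : u (w - 1) < u (w + 1))
    (hmin : ∀ q, u (q + 1) < u q → u w ≤ u q) :
    (cfs (fun i => u (i % w)) w).card + 1 ≤ (cfs u (w + 2)).card := by
  classical
  set t' : ℤ → ℝ := fun i => u (i % w) with ht'
  have hv : ∀ a, 0 ≤ a → a < w → t' a = u a := fun a ha hb' => by
    show u (a % w) = u a; rw [Int.emod_eq_of_lt ha hb']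
  have hvw : t' w = u 0 := by show u (w % w) = u 0; rw [Int.emod_self]
  have hper0 : u (w + 2) = u 0 := by
    have := h.per 0; rw [zero_add] at this; exact this
  have hper1 : u (w + 3) = u 1 := by
    have := h.per 1; rw [show (1 : ℤ) + (w + 2) = w + 3 by ring] at this; exact this
  have F5 : u (w + 1) < u 0 := by
    have := h.step_down (i := w) hmax
    rwa [hper0] at this
  have F6 : u 1 < u 0 := by
    have h51 : u (w + 1) < u (w + 1 + 1) := by
      rw [show w + 1 + 1 = w + 2 by ring, hper0]; exact F5
    have := h.step_up (i := w + 1) h51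
    rwa [show w + 1 + 2 = w + 3 by ring, show w + 1 + 1 = w + 2 by ring, hper1, hper0] at this
  have F7 : u (w - 1) < u 0 := hA.trans F5
  -- the injection
  set g : ℤ × ℤ → ℤ × ℤ := fun p =>
    if p.1 = w - 1 then (if u (p.2 + 1) < u w then (w - 1, p.2) else (w + 1, p.2)) else p
    with hg
  have extra_mem : ((w - 1, w) : ℤ × ℤ) ∈ cfs u (w + 2) := by
    rw [mem_cfs]
    refine ⟨⟨by omega, by omega⟩, ⟨by omega, by omega⟩, hA.le, ?_, ?_⟩
    · rw [show w - 1 + 1 = w by ring]; exact hmax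
    · rw [show w - 1 + 1 = w by ring]
  -- structural facts about members of cfs t' w
  have memfacts : ∀ p : ℤ × ℤ, p ∈ cfs t' w →
      0 ≤ p.1 ∧ p.1 < w ∧ 0 ≤ p.2 ∧ p.2 ≤ w - 2 := by
    rintro ⟨i, j⟩ hp
    rw [mem_cfs] at hp
    obtain ⟨⟨hi0, hiw⟩, ⟨hj0, hjw⟩, hc1, hc2, hc3⟩ := hp
    refine ⟨hi0, hiw, hj0, ?_⟩
    by_contra hj
    have hjeq : j = w - 1 := by omega
    subst hjeq
    by_cases hiL : i = w - 1
    · subst hiL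
      exact absurd hc2 (lt_irrefl _)
    · -- chain : u i ≤ u 0 < u (i+1) ≤ u (w-1) < u 0
      have e1 : t' (w - 1 + 1) = u 0 := by rw [show w - 1 + 1 = w by ring]; exact hvw
      have e2 : t' (i + 1) = u (i + 1) := hv _ (by omega) (by omega)
      have e3 : t' (w - 1) = u (w - 1) := hv _ (by omega) (by omega)
      rw [e1, e2] at hc2
      rw [e2, e3] at hc3
      linarith
  have mapsto : ∀ p ∈ cfs t' w, g p ∈ (cfs u (w + 2)).erase (w - 1, w) := by
    rintro ⟨i, j⟩ hp
    obtain ⟨hi0, hiw, hj0, hj2⟩ := memfacts _ hp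
    rw [mem_cfs] at hp
    obtain ⟨_, _, hc1, hc2, hc3⟩ := hp
    simp only at hc1 hc2 hc3 hi0 hiw hj0 hj2
    have e2 : t' (j + 1) = u (j + 1) := hv _ (by omega) (by omega)
    have e4 : t' j = u j := hv _ (by omega) (by omega)
    by_cases hiL : i = w - 1
    · subst hiL
      have e1 : t' (w - 1) = u (w - 1) := hv _ (by omega) (by omega)
      have e3 : t' (w - 1 + 1) = u 0 := by rw [show w - 1 + 1 = w by ring]; exact hvw
      rw [e1, e2] at hc1
      rw [e2, e3] at hc2
      rw [e3, e4] at hc3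
      -- hc1 : u (w-1) ≤ u (j+1), hc2 : u (j+1) < u 0, hc3 : u 0 ≤ u j
      have hwj : u w ≤ u j := hmin j (by linarith)
      by_cases hb : u (j + 1) < u w
      · have hgp : g (w - 1, j) = (w - 1, j) := by
          simp [hg, hb]
        rw [hgp, Finset.mem_erase, mem_cfs]
        refine ⟨by simp; omega, ⟨by omega, by omega⟩, ⟨by omega, by omega⟩, hc1, ?_, ?_⟩
        · rw [show w - 1 + 1 = w by ring]; exact hb
        · rw [show w - 1 + 1 = w by ring]; exact hwj
      · have hgp : g (w - 1, j) = (w + 1, j) := by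
          simp [hg, hb]
        have hble : u w < u (j + 1) := by
          have hne : u (j + 1) ≠ u w := h.tne (by omega) (by omega) (by omega)
          rcases lt_or_gt_of_ne hne with h' | h'
          · exact absurd h' hb
          · exact h'
        rw [hgp, Finset.mem_erase, mem_cfs]
        refine ⟨by simp; omega, ⟨by omega, by omega⟩, ⟨by omega, by omega⟩, ?_, ?_, ?_⟩
        · exact le_of_lt (hmax.trans hble)
        · rw [show w + 1 + 1 = w + 2 by ring, hper0]; exact hc2
        · rw [show w + 1 + 1 = w + 2 by ring, hper0]; exact hc3
    · -- i ≤ w - 2 : identity map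
      have hgp : g (i, j) = (i, j) := by simp [hg, hiL]
      have e1 : t' i = u i := hv _ (by omega) (by omega)
      have e3 : t' (i + 1) = u (i + 1) := hv _ (by omega) (by omega)
      rw [e1, e2] at hc1
      rw [e2, e3] at hc2
      rw [e3, e4] at hc3
      rw [hgp, Finset.mem_erase, mem_cfs]
      refine ⟨by simp; omega, ⟨by omega, by omega⟩, ⟨by omega, by omega⟩, hc1, hc2, hc3⟩
  have hinjg : Set.InjOn g ↑(cfs t' w) := by
    rintro ⟨i, j⟩ hp ⟨i', j'⟩ hp' heq
    rw [Finset.mem_coe] at hp hp'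
    obtain ⟨hi0, hiw, hj0, hj2⟩ := memfacts _ hp
    obtain ⟨hi0', hiw', hj0', hj2'⟩ := memfacts _ hp'
    simp only at hi0 hiw hj0 hj2 hi0' hiw' hj0' hj2'
    by_cases hiL : i = w - 1 <;> by_cases hiL' : i' = w - 1
    · subst hiL; subst hiL'
      by_cases hb : u (j + 1) < u w <;> by_cases hb' : u (j' + 1) < u w <;>
        simp [hg, hb, hb', Prod.ext_iff] at heq <;>
        simp [Prod.ext_iff] <;> omega
    · exfalso
      by_cases hb : u (j + 1) < u w <;>
        simp [hg, hiL, hiL', hb, Prod.ext_iff] at heq <;> omega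
    · exfalso
      by_cases hb : u (j' + 1) < u w <;>
        simp [hg, hiL, hiL', hb, Prod.ext_iff] at heq <;> omega
    · simpa [hg, hiL, hiL'] using heq
  have hcard := Finset.card_le_card_of_injOn g mapsto hinjg
  have := Finset.card_erase_of_mem extra_mem
  have hpos : 1 ≤ (cfs u (w + 2)).card := Finset.card_pos.mpr ⟨_, extra_mem⟩
  omega

end Tour
namespace Tour
variable {u : ℤ → ℝ} {w : ℤ}

lemma factsA (h : Tour u (w + 2)) (hw : 2 ≤ w)
    (hmax : u (w + 1) < u w) (hA : u (w - 1) < u (w + 1)) :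
    u (w - 1) < u 0 ∧ u 1 < u 0 ∧ u (w - 1) < u (w - 2) := by
  have hper0 : u (w + 2) = u 0 := by have := h.per 0; rwa [zero_add] at this
  have hper1 : u (w + 3) = u 1 := by
    have := h.per 1; rwa [show (1 : ℤ) + (w + 2) = w + 3 by ring] at this
  have F5 : u (w + 1) < u 0 := by
    have := h.step_down (i := w) hmax; rwa [hper0] at this
  have F6 : u 1 < u 0 := by
    have h51 : u (w + 1) < u (w + 1 + 1) := by
      rw [show w + 1 + 1 = w + 2 by ring, hper0]; exact F5
    have := h.step_up (i := w + 1) h51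
    rwa [show w + 1 + 2 = w + 3 by ring, show w + 1 + 1 = w + 2 by ring, hper1, hper0] at this
  have F2 : u (w - 1) < u w := by
    have := h.max_left (i := w) hmax; exact this
  have F4 : u (w - 1) < u (w - 2) := by
    have h2 : u (w - 1) < u (w - 1 + 1) := by rwa [show w - 1 + 1 = w by ring]
    have := h.min_left (i := w - 1) h2
    rwa [show w - 1 - 1 = w - 2 by ring] at this
  exact ⟨hA.trans F5, F6, F4⟩

lemma factsB (h : Tour u (w + 2)) (hw : 2 ≤ w)
    (hmax : u w < u (w + 1)) (hB : u 0 < u w) :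
    u 0 < u (w - 1) ∧ u 0 < u 1 ∧ u (w - 2) < u (w - 1) := by
  have hper0 : u (w + 2) = u 0 := by have := h.per 0; rwa [zero_add] at this
  have hper1 : u (w + 3) = u 1 := by
    have := h.per 1; rwa [show (1 : ℤ) + (w + 2) = w + 3 by ring] at this
  have G2 : u (w + 2) < u (w + 1) := h.step_up (i := w) hmax
  have G5 : u 0 < u 1 := by
    have h2 : u (w + 1 + 1) < u (w + 1) := by rwa [show w + 1 + 1 = w + 2 by ring]
    have := h.step_down (i := w + 1) h2
    rwa [show w + 1 + 1 = w + 2 by ring, show w + 1 + 2 = w + 3 by ring, hper0, hper1] at this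
  have G4 : u w < u (w - 1) := h.min_left (i := w) hmax
  have G6 : u (w - 2) < u (w - 1) := by
    have h2 : u (w - 1 + 1) < u (w - 1) := by rwa [show w - 1 + 1 = w by ring]
    have := h.max_left (i := w - 1) h2
    rwa [show w - 1 - 1 = w - 2 by ring] at this
  exact ⟨hB.trans G4, G5, G6⟩

lemma reduceB (h : Tour u (w + 2)) (hw : 2 ≤ w)
    (hmax : u w < u (w + 1))
    (hB : u 0 < u w)
    (hmin : ∀ q, u (q + 1) < u q → u (w + 1) ≤ u q) :
    (cfs (fun i => u (i % w)) w).card + 1 ≤ (cfs u (w + 2)).card := by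
  classical
  set t' : ℤ → ℝ := fun i => u (i % w) with ht'
  have hv : ∀ a, 0 ≤ a → a < w → t' a = u a := fun a ha hb' => by
    show u (a % w) = u a; rw [Int.emod_eq_of_lt ha hb']
  have hvw : t' w = u 0 := by show u (w % w) = u 0; rw [Int.emod_self]
  have hper0 : u (w + 2) = u 0 := by have := h.per 0; rwa [zero_add] at this
  have G4 : u w < u (w - 1) := h.min_left (i := w) hmax
  have G7 : u 0 < u (w - 1) := hB.trans G4
  set g : ℤ × ℤ → ℤ × ℤ := fun p =>
    if p.2 = w - 1 then (if u (p.1 + 1) < u (w + 1) then (p.1, w + 1) else (p.1, w - 1)) else p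
    with hg
  have extra_mem : ((w, w - 1) : ℤ × ℤ) ∈ cfs u (w + 2) := by
    rw [mem_cfs]
    refine ⟨⟨by omega, by omega⟩, ⟨by omega, by omega⟩, ?_, ?_, ?_⟩
    · rw [show w - 1 + 1 = w by ring]
    · rw [show w - 1 + 1 = w by ring]; exact hmax
    · exact hmin (w - 1) (by rwa [show w - 1 + 1 = w by ring])
  have memfacts : ∀ p : ℤ × ℤ, p ∈ cfs t' w →
      0 ≤ p.1 ∧ p.1 ≤ w - 2 ∧ 0 ≤ p.2 ∧ p.2 < w := by
    rintro ⟨i, j⟩ hp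
    rw [mem_cfs] at hp
    obtain ⟨⟨hi0, hiw⟩, ⟨hj0, hjw⟩, hc1, hc2, hc3⟩ := hp
    refine ⟨hi0, ?_, hj0, hjw⟩
    by_contra hi
    have hieq : i = w - 1 := by omega
    subst hieq
    by_cases hjL : j = w - 1
    · subst hjL
      exact absurd hc2 (lt_irrefl _)
    · have e1 : t' (w - 1) = u (w - 1) := hv _ (by omega) (by omega)
      have e2 : t' (j + 1) = u (j + 1) := hv _ (by omega) (by omega)
      have e3 : t' (w - 1 + 1) = u 0 := by rw [show w - 1 + 1 = w by ring]; exact hvw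
      rw [e1, e2] at hc1
      rw [e2, e3] at hc2
      linarith
  have mapsto : ∀ p ∈ cfs t' w, g p ∈ (cfs u (w + 2)).erase (w, w - 1) := by
    rintro ⟨i, j⟩ hp
    obtain ⟨hi0, hi2, hj0, hjw⟩ := memfacts _ hp
    rw [mem_cfs] at hp
    obtain ⟨_, _, hc1, hc2, hc3⟩ := hp
    simp only at hc1 hc2 hc3 hi0 hi2 hj0 hjw
    have e1 : t' i = u i := hv _ (by omega) (by omega)
    have e3 : t' (i + 1) = u (i + 1) := hv _ (by omega) (by omega)
    by_cases hjL : j = w - 1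
    · subst hjL
      have e2 : t' (w - 1 + 1) = u 0 := by rw [show w - 1 + 1 = w by ring]; exact hvw
      have e4 : t' (w - 1) = u (w - 1) := hv _ (by omega) (by omega)
      rw [e1, e2] at hc1
      rw [e2, e3] at hc2
      rw [e3, e4] at hc3
      -- hc1 : u i ≤ u 0, hc2 : u 0 < u (i+1), hc3 : u (i+1) ≤ u (w-1)
      by_cases hb : u (i + 1) < u (w + 1)
      · have hgp : g (i, w - 1) = (i, w + 1) := by simp [hg, hb]
        rw [hgp, Finset.mem_erase, mem_cfs]
        refine ⟨by simp; omega, ⟨by omega, by omega⟩, ⟨by omega, by omega⟩, ?_, ?_, ?_⟩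
        · rw [show w + 1 + 1 = w + 2 by ring, hper0]; exact hc1
        · rw [show w + 1 + 1 = w + 2 by ring, hper0]; exact hc2
        · exact hb.le
      · have hble : u (w + 1) < u (i + 1) := by
          have hne : u (i + 1) ≠ u (w + 1) := h.tne (by omega) (by omega) (by omega)
          rcases lt_or_gt_of_ne hne with h' | h'
          · exact absurd h' hb
          · exact h'
        have hgp : g (i, w - 1) = (i, w - 1) := by simp [hg, hb]
        rw [hgp, Finset.mem_erase, mem_cfs]
        refine ⟨by simp; omega, ⟨by omega, by omega⟩, ⟨by omega, by omega⟩, ?_, ?_, ?_⟩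
        · rw [show w - 1 + 1 = w by ring]; exact le_of_lt (lt_of_le_of_lt hc1 hB)
        · rw [show w - 1 + 1 = w by ring]; exact hmax.trans hble
        · exact hc3
    · have hgp : g (i, j) = (i, j) := by simp [hg, hjL]
      have e2 : t' (j + 1) = u (j + 1) := hv _ (by omega) (by omega)
      have e4 : t' j = u j := hv _ (by omega) (by omega)
      rw [e1, e2] at hc1
      rw [e2, e3] at hc2
      rw [e3, e4] at hc3
      rw [hgp, Finset.mem_erase, mem_cfs]
      refine ⟨by simp; omega, ⟨by omega, by omega⟩, ⟨by omega, by omega⟩, hc1, hc2, hc3⟩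
  have hinjg : Set.InjOn g ↑(cfs t' w) := by
    rintro ⟨i, j⟩ hp ⟨i', j'⟩ hp' heq
    rw [Finset.mem_coe] at hp hp'
    obtain ⟨hi0, hi2, hj0, hjw⟩ := memfacts _ hp
    obtain ⟨hi0', hi2', hj0', hjw'⟩ := memfacts _ hp'
    simp only at hi0 hi2 hj0 hjw hi0' hi2' hj0' hjw'
    by_cases hjL : j = w - 1 <;> by_cases hjL' : j' = w - 1
    · subst hjL; subst hjL'
      by_cases hb : u (i + 1) < u (w + 1) <;> by_cases hb' : u (i' + 1) < u (w + 1) <;>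
        simp [hg, hb, hb', Prod.ext_iff] at heq <;>
        simp [Prod.ext_iff] <;> omega
    · exfalso
      by_cases hb : u (i + 1) < u (w + 1) <;>
        simp [hg, hjL, hjL', hb, Prod.ext_iff] at heq <;> omega
    · exfalso
      by_cases hb : u (i' + 1) < u (w + 1) <;>
        simp [hg, hjL, hjL', hb, Prod.ext_iff] at heq <;> omega
    · simpa [hg, hjL, hjL'] using heq
  have hcard := Finset.card_le_card_of_injOn g mapsto hinjg
  have := Finset.card_erase_of_mem extra_mem
  have hpos : 1 ≤ (cfs u (w + 2)).card := Finset.card_pos.mpr ⟨_, extra_mem⟩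
  omega

end Tour
theorem key : ∀ m : ℕ, 1 ≤ m → ∀ t : ℤ → ℝ, Tour t (2 * (m : ℤ)) →
    m ≤ (cfs t (2 * (m : ℤ))).card := by
  intro m
  induction m using Nat.strong_induction_on with
  | _ m ih =>
    intro hm t ht
    by_cases hm1 : m = 1
    · subst hm1
      have h2 : ((2 : ℤ) * ((1 : ℕ) : ℤ)) = 2 := by norm_num
      rw [h2] at ht ⊢
      have hper2 : t 2 = t 0 := by
        have := ht.per 0; rwa [zero_add] at this
      rcases ht.alt 0 with hup | hdn
      · have hmem : ((0, 1) : ℤ × ℤ) ∈ cfs t 2 := by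
          rw [mem_cfs]
          refine ⟨⟨le_rfl, by norm_num⟩, ⟨by norm_num, by norm_num⟩, ?_, ?_, ?_⟩
          · show t 0 ≤ t (1 + 1)
            rw [show (1 : ℤ) + 1 = 2 by norm_num, hper2]
          · show t (1 + 1) < t (0 + 1)
            rw [show (1 : ℤ) + 1 = 2 by norm_num, hper2, show (0 : ℤ) + 1 = 1 by norm_num]
            rwa [show (0 : ℤ) + 1 = 1 by norm_num] at hup
          · show t (0 + 1) ≤ t 1
            rw [show (0 : ℤ) + 1 = 1 by norm_num]
        exact Finset.card_pos.mpr ⟨_, hmem⟩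
      · have hmem : ((1, 0) : ℤ × ℤ) ∈ cfs t 2 := by
          rw [mem_cfs]
          refine ⟨⟨by norm_num, by norm_num⟩, ⟨le_rfl, by norm_num⟩, ?_, ?_, ?_⟩
          · show t 1 ≤ t (0 + 1)
            rw [show (0 : ℤ) + 1 = 1 by norm_num]
          · show t (0 + 1) < t (1 + 1)
            rw [show (1 : ℤ) + 1 = 2 by norm_num, hper2, show (0 : ℤ) + 1 = 1 by norm_num]
            rwa [show (0 : ℤ) + 1 = 1 by norm_num] at hdn
          · show t (1 + 1) ≤ t 0
            rw [show (1 : ℤ) + 1 = 2 by norm_num, hper2]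
        exact Finset.card_pos.mpr ⟨_, hmem⟩
    · -- m ≥ 2
      have hm2 : 2 ≤ m := by omega
      set n : ℤ := 2 * (m : ℤ) with hn
      have hn4 : 4 ≤ n := by
        have : (2 : ℤ) ≤ (m : ℤ) := by exact_mod_cast hm2
        omega
      set w : ℤ := n - 2 with hwdef
      have hw2 : 2 ≤ w := by omega
      obtain ⟨p, hp0, hpn, hpd, hpmin⟩ := ht.exists_minmax
      have hne : t (p - 1) ≠ t (p + 1) := ht.tne (by omega) (by omega) (by omega)
      have htw2 : Tour t (w + 2) := by
        rw [show w + 2 = n by ring]; exact ht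
      -- the two cases
      rcases lt_or_gt_of_ne hne with hAB | hAB
      · -- Case A : remove p (max) and p+1
        set s : ℤ := p + 2 - n with hsdef
        set u : ℤ → ℝ := fun i => t (i + s) with hudef
        have hu : Tour u n := ht.shift s
        have huw2 : Tour u (w + 2) := by rw [show w + 2 = n by ring]; exact hu
        have e0 : ∀ a b : ℤ, a + s = b → u a = t b := fun a b hab => by
          show t (a + s) = t b; rw [hab]
        have hmax' : u (w + 1) < u w := by
          rw [e0 (w + 1) (p + 1) (by ring), e0 w p (by ring)]; exact hpd
        have hA' : u (w - 1) < u (w + 1) := by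
          rw [e0 (w - 1) (p - 1) (by ring), e0 (w + 1) (p + 1) (by ring)]; exact hAB
        have hmin' : ∀ q, u (q + 1) < u q → u w ≤ u q := by
          intro q hq
          rw [e0 (q + 1) (q + s + 1) (by ring), e0 q (q + s) rfl] at hq
          rw [e0 w p (by ring), e0 q (q + s) rfl]
          exact hpmin (q + s) hq
        obtain ⟨b1, b2, b3⟩ := Tour.factsA huw2 hw2 hmax' hA'
        have htred : Tour (fun i => u (i % w)) w :=
          Tour.tour_reduce huw2 hw2 (Or.inl ⟨b1, b2, b3⟩)
        have hwcast : 2 * ((m - 1 : ℕ) : ℤ) = w := by push_cast; omega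
        have hIH : (m - 1 : ℕ) ≤ (cfs (fun i => u (i % w)) w).card := by
          have := ih (m - 1) (by omega) (by omega) (fun i => u (i % w)) (by rw [hwcast]; exact htred)
          rwa [hwcast] at this
        have hred := Tour.reduceA huw2 hw2 hmax' hA' hmin'
        have hshift : (cfs u n).card ≤ (cfs t n).card := ht.cfs_shift_le s
        rw [show w + 2 = n by ring] at hred
        omega
      · -- Case B : remove p-1 and p (max)
        set s : ℤ := p + 1 - n with hsdef
        set u : ℤ → ℝ := fun i => t (i + s) with hudef
        have hu : Tour u n := ht.shift s
        have huw2 : Tour u (w + 2) := by rw [show w + 2 = n by ring]; exact hu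
        have e0 : ∀ a b : ℤ, a + s = b → u a = t b := fun a b hab => by
          show t (a + s) = t b; rw [hab]
        have hu0 : u 0 = t (p + 1) := by
          rw [e0 0 (p + 1 - n) (by ring)]
          have := ht.per (p + 1 - n)
          rw [show p + 1 - n + n = p + 1 by ring] at this
          exact this.symm
        have hmax' : u w < u (w + 1) := by
          rw [e0 (w + 1) p (by ring), e0 w (p - 1) (by ring)]
          exact ht.max_left (i := p) hpd
        have hB' : u 0 < u w := by
          rw [hu0, e0 w (p - 1) (by ring)]; exact hAB
        have hmin' : ∀ q, u (q + 1) < u q → u (w + 1) ≤ u q := by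
          intro q hq
          rw [e0 (q + 1) (q + s + 1) (by ring), e0 q (q + s) rfl] at hq
          rw [e0 (w + 1) p (by ring), e0 q (q + s) rfl]
          exact hpmin (q + s) hq
        obtain ⟨b1, b2, b3⟩ := Tour.factsB huw2 hw2 hmax' hB'
        have htred : Tour (fun i => u (i % w)) w :=
          Tour.tour_reduce huw2 hw2 (Or.inr ⟨b1, b2, b3⟩)
        have hwcast : 2 * ((m - 1 : ℕ) : ℤ) = w := by push_cast; omega
        have hIH : (m - 1 : ℕ) ≤ (cfs (fun i => u (i % w)) w).card := by
          have := ih (m - 1) (by omega) (by omega) (fun i => u (i % w)) (by rw [hwcast]; exact htred)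
          rwa [hwcast] at this
        have hred := Tour.reduceB huw2 hw2 hmax' hB' hmin'
        have hshift : (cfs u n).card ≤ (cfs t n).card := ht.cfs_shift_le s
        rw [show w + 2 = n by ring] at hred
        omega

/-- A contracted tour on `2m` distinct turning points has at least `m`
conflicting pairs. -/
theorem stmt_8 (m : ℕ) (hm : 1 ≤ m) (t : ℤ → ℝ)
    (hper : ∀ i, t (i + 2 * (m : ℤ)) = t i)
    (hinj : ∀ i j, 0 ≤ i → i < 2 * (m : ℤ) → 0 ≤ j → j < 2 * (m : ℤ) →
      t i = t j → i = j)
    (hturn : ∀ i, turning t i) :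
    m ≤ Nat.card {p : ℤ × ℤ // 0 ≤ p.1 ∧ p.1 < 2 * (m : ℤ) ∧
          0 ≤ p.2 ∧ p.2 < 2 * (m : ℤ) ∧ conflicting t p.1 p.2} := by
  have hm' : (1 : ℤ) ≤ (m : ℤ) := by exact_mod_cast hm
  have ht : Tour t (2 * (m : ℤ)) := ⟨by omega, hper, hinj, hturn⟩
  have hequiv : {p : ℤ × ℤ // 0 ≤ p.1 ∧ p.1 < 2 * (m : ℤ) ∧
      0 ≤ p.2 ∧ p.2 < 2 * (m : ℤ) ∧ conflicting t p.1 p.2} ≃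
      {p : ℤ × ℤ // p ∈ cfs t (2 * (m : ℤ))} :=
    Equiv.subtypeEquivRight (fun p => by rw [mem_cfs]; tauto)
  rw [Nat.card_congr hequiv, Nat.card_eq_finsetCard]
  exact key m hm t ht
end

section
/- Let ALG be a separable online algorithm for the online facility assignment problem OFA(k,ℓ). If ALG is c-competitive for OFA(k,1) (servers of capacity 1), then ALG is c-competitive for OFA(k,ℓ) for every ℓ ≥ 1. -/
/-- Total matching cost of the assignment `f` for requests `σ` with servers `S`. -/
noncomputable def matchCost {X : Type*} [MetricSpace X] {k n : ℕ}
    (S : Fin k → X) (σ : Fin n → X) (f : Fin n → Fin k) : ℝ :=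
  ∑ i, dist (σ i) (S (f i))

/-- The assignment `f` respects the capacity `cap` of every server. -/
def validCap {k n : ℕ} (cap : ℕ) (f : Fin n → Fin k) : Prop :=
  ∀ t : Fin k, (Finset.univ.filter (fun i => f i = t)).card ≤ cap

/-- If an online algorithm `A` for OFA(k,ℓ) is separable (every request
sequence `σ` of length `kℓ` admits a coprime partition into `ℓ` subsequences
of length `k` on which the per-request servers of `A` resp. of the optimal
offline algorithm `O` agree with the capacity-1 runs on the subsequences
alone), and `A` is `c`-competitive for OFA(k,1), then `A` is `c`-competitive
for OFA(k,ℓ). -/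
theorem stmt_14 {X : Type*} [MetricSpace X] (k ℓ : ℕ) (hk : 1 ≤ k) (hℓ : 1 ≤ ℓ)
    (S : Fin k → X)
    (A O : (n : ℕ) → (Fin n → X) → (Fin n → Fin k))
    (c : ℝ) (hc : 1 ≤ c)
    -- `A` and `O` respect the capacities
    (hAvalid1 : ∀ σ : Fin k → X, validCap 1 (A k σ))
    (hAvalidL : ∀ σ : Fin (k * ℓ) → X, validCap ℓ (A (k * ℓ) σ))
    (hOvalid1 : ∀ σ : Fin k → X, validCap 1 (O k σ))
    (hOvalidL : ∀ σ : Fin (k * ℓ) → X, validCap ℓ (O (k * ℓ) σ))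
    -- `O` is an optimal offline algorithm (for capacity 1 and for capacity ℓ)
    (hOopt1 : ∀ (σ : Fin k → X) (g : Fin k → Fin k), validCap 1 g →
        matchCost S σ (O k σ) ≤ matchCost S σ g)
    (hOoptL : ∀ (σ : Fin (k * ℓ) → X) (g : Fin (k * ℓ) → Fin k), validCap ℓ g →
        matchCost S σ (O (k * ℓ) σ) ≤ matchCost S σ g)
    -- `A` is separable: coprime partition with per-request agreement
    (hsep : ∀ σ : Fin (k * ℓ) → X, ∃ e : Fin ℓ × Fin k → Fin (k * ℓ),
        Function.Bijective e ∧
        (∀ p : Fin ℓ, StrictMono (fun j : Fin k => e (p, j))) ∧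
        (∀ (p : Fin ℓ) (j j' : Fin k), j ≠ j' →
            A (k * ℓ) σ (e (p, j)) ≠ A (k * ℓ) σ (e (p, j')) ∧
            O (k * ℓ) σ (e (p, j)) ≠ O (k * ℓ) σ (e (p, j'))) ∧
        (∀ (p : Fin ℓ) (j : Fin k),
            A (k * ℓ) σ (e (p, j)) = A k (fun j' => σ (e (p, j'))) j ∧
            O (k * ℓ) σ (e (p, j)) = O k (fun j' => σ (e (p, j'))) j))
    -- `A` is `c`-competitive for OFA(k,1)
    (hcomp1 : ∀ (σ : Fin k → X) (g : Fin k → Fin k), validCap 1 g →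
        matchCost S σ (A k σ) ≤ c * matchCost S σ g) :
    -- then `A` is `c`-competitive for OFA(k,ℓ)
    ∀ (σ : Fin (k * ℓ) → X) (g : Fin (k * ℓ) → Fin k), validCap ℓ g →
      matchCost S σ (A (k * ℓ) σ) ≤ c * matchCost S σ g := by
  intro σ g hg
  obtain ⟨e, he, hmono, hcop, hagree⟩ := hsep σ
  have key : matchCost S σ (A (k * ℓ) σ) ≤ c * matchCost S σ (O (k * ℓ) σ) := by
    have hA : matchCost S σ (A (k * ℓ) σ)
        = ∑ p : Fin ℓ, matchCost S (fun j' => σ (e (p, j'))) (A k (fun j' => σ (e (p, j')))) := by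
      unfold matchCost
      rw [← Fintype.sum_bijective e he _ _ (fun _ => rfl), Fintype.sum_prod_type]
      exact Finset.sum_congr rfl fun p _ => Finset.sum_congr rfl fun j _ => by
        rw [(hagree p j).1]
    have hO : matchCost S σ (O (k * ℓ) σ)
        = ∑ p : Fin ℓ, matchCost S (fun j' => σ (e (p, j')))
            (fun j => O (k * ℓ) σ (e (p, j))) := by
      unfold matchCost
      rw [← Fintype.sum_bijective e he _ _ (fun _ => rfl), Fintype.sum_prod_type]
    rw [hA, hO, Finset.mul_sum]
    apply Finset.sum_le_sum
    intro p _
    apply hcomp1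
    intro t
    rw [Finset.card_le_one]
    intro a ha b hb
    simp only [Finset.mem_filter] at ha hb
    by_contra hab
    exact (hcop p a b hab).2 (ha.2.trans hb.2.symm)
  calc matchCost S σ (A (k * ℓ) σ) ≤ c * matchCost S σ (O (k * ℓ) σ) := key
    _ ≤ c * matchCost S σ g :=
      mul_le_mul_of_nonneg_left (hOoptL σ g hg) (le_trans zero_le_one hc)
end

section
/- For the online facility assignment problem on a line with k ≥ 2 equidistant servers (OFAL_eq(k,ℓ)), the competitive ratio of the greedy algorithm GRDY is at least 4k − 5. Concretely, with servers at positions 0, 1, …, k−1 each of capacity 1, the request sequence r₁ = 1/2, r₂ = 1, r₃ = 2, …, r_k = k−1 forces GRDY to incur cost (4k−5)/2 while OPT incurs cost 1/2. -/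
/-- The nearest free server to the request `r` (ties broken in favour of the
server with the largest index): the maximum-index element among the free
servers minimizing the distance to `r`. -/
noncomputable def nearestFree (k : ℕ) (pos : Fin k → ℝ)
    (free : Finset (Fin k)) (r : ℝ) : Option (Fin k) :=
  (free.filter (fun t => ∀ t' ∈ free, |r - pos t| ≤ |r - pos t'|)).max

/-- The list of servers chosen by the greedy algorithm GRDY on the request
list `rs`, starting with the set `free` of free (capacity-1) servers. -/
noncomputable def greedyRun (k : ℕ) (pos : Fin k → ℝ) :
    List ℝ → Finset (Fin k) → List (Fin k)
  | [], _ => []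
  | r :: rs, free =>
    match nearestFree k pos free r with
    | none => []
    | some t => t :: greedyRun k pos rs (free.erase t)

/-- The total cost incurred by GRDY on the request list `rs`. -/
noncomputable def greedyCost (k : ℕ) (pos : Fin k → ℝ) (rs : List ℝ) : ℝ :=
  ((rs.zip (greedyRun k pos rs Finset.univ)).map (fun p => |p.1 - pos p.2|)).sum

def fm (k m : ℕ) : Finset (Fin k) :=
  Finset.univ.filter (fun t => (t:ℕ) = 0 ∨ m < (t:ℕ))

lemma maxh {k : ℕ} {S : Finset (Fin k)} {a : Fin k} (ha : a ∈ S)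
    (hub : ∀ b ∈ S, b ≤ a) : S.max = some a :=
  le_antisymm (Finset.max_le (fun b hb => WithBot.coe_le_coe.mpr (hub b hb))) (Finset.le_max ha)

lemma absNat (a b : ℕ) : |(a:ℝ) - (b:ℝ)| = (((a:ℤ) - b).natAbs : ℝ) := by
  rw [Nat.cast_natAbs]; push_cast; ring_nf

lemma halfAbs {t : ℕ} : (1:ℝ)/2 ≤ |1/2 - (t:ℝ)| := by
  rcases Nat.eq_zero_or_pos t with h | h
  · rw [h]; rw [abs_of_nonneg (by norm_num)]; norm_num
  · have : (1:ℝ) ≤ (t : ℝ) := by exact_mod_cast h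
    rw [abs_of_nonpos (by linarith)]; linarith

lemma nf_step {k : ℕ} (pos : Fin k → ℝ) (hpos : ∀ j : Fin k, pos j = (j : ℕ))
    (m : ℕ) (h1 : 1 ≤ m) (h2 : m + 1 < k) :
    nearestFree k pos (fm k m) (m : ℝ) = some ⟨m+1, h2⟩ := by
  unfold nearestFree
  apply maxh
  · simp only [Finset.mem_filter, fm, Finset.mem_univ, true_and]
    refine ⟨Or.inr (by exact Nat.lt_succ_self m), ?_⟩
    intro t' ht'
    rw [hpos, hpos]
    simp only [absNat]
    rw [Nat.cast_le]
    omega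
  · intro b hb
    simp only [Finset.mem_filter, fm, Finset.mem_univ, true_and] at hb
    obtain ⟨hb1, hb2⟩ := hb
    have := hb2 ⟨m+1, h2⟩ (Or.inr (Nat.lt_succ_self m))
    rw [hpos, hpos] at this
    simp only [absNat] at this
    rw [Nat.cast_le] at this
    rw [Fin.le_def]
    show (b : ℕ) ≤ m + 1
    omega

lemma nf_first {k : ℕ} (hk : 2 ≤ k) (pos : Fin k → ℝ) (hpos : ∀ j : Fin k, pos j = (j : ℕ)) :
    nearestFree k pos Finset.univ (1/2 : ℝ) = some ⟨1, by omega⟩ := by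
  have hv : (((⟨1, by omega⟩ : Fin k)) : ℕ) = 1 := rfl
  have habs1 : |(1:ℝ)/2 - ((((⟨1, by omega⟩ : Fin k)) : ℕ) : ℝ)| = 1/2 := by
    rw [hv]; norm_num
  unfold nearestFree
  apply maxh
  · simp only [Finset.mem_filter, Finset.mem_univ, true_and]
    intro t' _
    rw [hpos, hpos, habs1]
    exact halfAbs
  · intro b hb
    simp only [Finset.mem_filter, Finset.mem_univ, true_and] at hb
    have := hb ⟨1, by omega⟩ trivial
    rw [hpos, hpos, habs1] at this
    rw [Fin.le_def, hv]
    by_contra hcon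
    push_neg at hcon
    have h2 : (2:ℝ) ≤ ((b:ℕ):ℝ) := by exact_mod_cast hcon
    rw [abs_of_nonpos (by linarith)] at this
    linarith

lemma nf_last {k : ℕ} (hk : 2 ≤ k) (pos : Fin k → ℝ) (hpos : ∀ j : Fin k, pos j = (j : ℕ)) :
    nearestFree k pos (fm k (k-1)) ((k-1 : ℕ) : ℝ) = some ⟨0, by linarith⟩ := by
  have hfm : fm k (k-1) = {⟨0, by linarith⟩} := by
    ext t; simp only [fm, Finset.mem_filter, Finset.mem_univ, true_and, Finset.mem_singleton]
    constructor
    · rintro (h | h)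
      · exact Fin.ext h
      · exact absurd t.isLt (by omega)
    · rintro rfl; exact Or.inl rfl
  unfold nearestFree
  rw [hfm]
  apply maxh
  · simp
  · intro b hb; simp only [Finset.mem_filter, Finset.mem_singleton] at hb; exact le_of_eq hb.1

lemma erase_univ_one {k : ℕ} (hk : 2 ≤ k) :
    (Finset.univ : Finset (Fin k)).erase ⟨1, by omega⟩ = fm k 1 := by
  ext t
  simp only [Finset.mem_erase, Finset.mem_univ, and_true, fm, Finset.mem_filter, true_and]
  constructor
  · intro h
    have : (t : ℕ) ≠ 1 := fun hc => h (Fin.ext hc)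
    omega
  · intro h hc
    have : (t : ℕ) = 1 := by rw [hc]
    omega

lemma erase_fm {k m : ℕ} (h2 : m + 1 < k) :
    (fm k m).erase ⟨m+1, h2⟩ = fm k (m+1) := by
  ext t
  simp only [Finset.mem_erase, fm, Finset.mem_filter, Finset.mem_univ, true_and]
  constructor
  · rintro ⟨hne, h | h⟩
    · exact Or.inl h
    · have : (t : ℕ) ≠ m + 1 := fun hc => hne (Fin.ext hc)
      omega
  · rintro (h | h)
    · refine ⟨fun hc => ?_, Or.inl h⟩
      have : (t : ℕ) = m + 1 := by rw [hc]
      omega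
    · refine ⟨fun hc => ?_, Or.inr (by omega)⟩
      have : (t : ℕ) = m + 1 := by rw [hc]
      omega

lemma costAux {k : ℕ} (hk : 2 ≤ k) (pos : Fin k → ℝ) (hpos : ∀ j : Fin k, pos j = (j : ℕ)) :
    ∀ n m : ℕ, 1 ≤ m → m + n = k - 1 →
    ((((List.range' m (k - m)).map (Nat.cast : ℕ → ℝ)).zip
      (greedyRun k pos ((List.range' m (k - m)).map (Nat.cast : ℕ → ℝ)) (fm k m))).map
      (fun p => |p.1 - pos p.2|)).sum = (n : ℝ) + ((k:ℝ) - 1) := by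
  intro n
  induction n with
  | zero =>
    intro m hm1 hm2
    have hm : m = k - 1 := by omega
    subst hm
    have hkm : k - (k - 1) = 1 := by omega
    rw [hkm]
    have hr : List.range' (k-1) 1 = [k-1] := rfl
    rw [hr]
    show ((([((k-1:ℕ):ℝ)]).zip (greedyRun k pos [((k-1:ℕ):ℝ)] (fm k (k-1)))).map _).sum = _
    rw [greedyRun]
    rw [nf_last hk pos hpos]
    simp only [List.zip_cons_cons, List.map_cons, List.map_nil, List.sum_cons, List.sum_nil]
    rw [greedyRun]
    simp only [List.zip_nil_right, List.map_nil, List.sum_nil, add_zero]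
    rw [hpos]
    have h0 : (((⟨0, by omega⟩ : Fin k) : ℕ) : ℝ) = 0 := by norm_num
    rw [h0, sub_zero, abs_of_nonneg (by positivity)]
    push_cast [Nat.cast_sub (by omega : 1 ≤ k)]
    ring
  | succ n ih =>
    intro m hm1 hm2
    have h2 : m + 1 < k := by omega
    have hkm : k - m = (k - (m+1)) + 1 := by omega
    rw [hkm]
    have hr : List.range' m (k - (m+1) + 1) = m :: List.range' (m+1) (k - (m+1)) := rfl
    rw [hr]
    simp only [List.map_cons]
    rw [greedyRun]
    rw [nf_step pos hpos m hm1 h2]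
    simp only [List.zip_cons_cons, List.map_cons, List.sum_cons]
    rw [erase_fm h2]
    rw [ih (m+1) (by omega) (by omega)]
    rw [hpos]
    have hv : (((⟨m+1, h2⟩ : Fin k) : ℕ) : ℝ) = (m:ℝ) + 1 := by push_cast; rfl
    rw [hv]
    rw [show ((m:ℝ) - ((m:ℝ)+1)) = -1 by ring, abs_neg, abs_one]
    push_cast
    ring

lemma greedyRun_cons {k : ℕ} (pos : Fin k → ℝ) (r : ℝ) (rs : List ℝ)
    (free : Finset (Fin k)) (t : Fin k) (h : nearestFree k pos free r = some t) :
    greedyRun k pos (r :: rs) free = t :: greedyRun k pos rs (free.erase t) := by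
  rw [greedyRun, h]

/-- Lower bound `4k − 5` for GRDY on `k ≥ 2` equidistant capacity-1 servers at
positions `0, 1, …, k−1`: on the request sequence `r₁ = 1/2`, `rⱼ = j − 1`
(`2 ≤ j ≤ k`), GRDY incurs cost `(4k−5)/2` while the optimal offline cost is
exactly `1/2`; hence GRDY's cost is at least `4k−5` times the optimum. -/
theorem stmt_15 (k : ℕ) (hk : 2 ≤ k)
    (pos : Fin k → ℝ) (hpos : ∀ j : Fin k, pos j = (j : ℕ))
    (σ : Fin k → ℝ) (hσ0 : σ ⟨0, by omega⟩ = 1 / 2)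
    (hσ : ∀ j : Fin k, 0 < (j : ℕ) → σ j = (j : ℕ)) :
    greedyCost k pos (List.ofFn σ) = (4 * (k : ℝ) - 5) / 2 ∧
    (∀ g : Fin k → Fin k, Function.Injective g →
      (1 : ℝ) / 2 ≤ ∑ i, |σ i - pos (g i)|) ∧
    (∃ g : Fin k → Fin k, Function.Injective g ∧
      ∑ i, |σ i - pos (g i)| = (1 : ℝ) / 2) ∧
    (4 * (k : ℝ) - 5) * (1 / 2) ≤ greedyCost k pos (List.ofFn σ) := by
  -- the request list
  have hlist : List.ofFn σ = (1/2 : ℝ) :: (List.range' 1 (k-1)).map (Nat.cast : ℕ → ℝ) := by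
    apply List.ext_getElem
    · simp [List.length_ofFn]
      omega
    · intro i h1 h2
      rcases Nat.eq_zero_or_pos i with hi | hi
      · subst hi
        simp only [List.getElem_ofFn, List.getElem_cons_zero]
        convert hσ0 using 2
      · obtain ⟨j, rfl⟩ := Nat.exists_eq_succ_of_ne_zero (by omega : i ≠ 0)
        simp only [List.getElem_ofFn, List.getElem_cons_succ, List.getElem_map,
          List.getElem_range']
        rw [hσ ⟨j+1, by simpa [List.length_ofFn] using h1⟩ (by simp)]
        norm_num [add_comm]
  have hcost : greedyCost k pos (List.ofFn σ) = (4 * (k : ℝ) - 5) / 2 := by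
    rw [greedyCost, hlist]
    rw [greedyRun_cons pos _ _ _ _ (nf_first hk pos hpos), erase_univ_one hk]
    simp only [List.zip_cons_cons, List.map_cons, List.sum_cons]
    have hkm : k - 1 = k - 1 := rfl
    have := costAux hk pos hpos (k-2) 1 le_rfl (by omega)
    rw [this]
    rw [hpos]
    have hv : (((⟨1, by omega⟩ : Fin k) : ℕ) : ℝ) = 1 := by norm_num
    rw [hv]
    rw [show |(1:ℝ)/2 - 1| = 1/2 by norm_num]
    push_cast [Nat.cast_sub hk]
    ring
  refine ⟨hcost, ?_, ?_, ?_⟩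
  · intro g hg
    have h0 : (1:ℝ)/2 ≤ |σ ⟨0, by omega⟩ - pos (g ⟨0, by omega⟩)| := by
      rw [hσ0, hpos]; exact halfAbs
    calc (1:ℝ)/2 ≤ |σ ⟨0, by omega⟩ - pos (g ⟨0, by omega⟩)| := h0
      _ ≤ ∑ i, |σ i - pos (g i)| :=
        Finset.single_le_sum (f := fun i => |σ i - pos (g i)|) (fun i _ => abs_nonneg _) (Finset.mem_univ _)
  · refine ⟨id, Function.injective_id, ?_⟩
    rw [Finset.sum_eq_single ⟨0, by omega⟩]
    · rw [hσ0, hpos, id]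
      norm_num
    · intro b _ hb
      have hb' : 0 < (b : ℕ) := by
        rcases Nat.eq_zero_or_pos (b : ℕ) with h | h
        · exact absurd (Fin.ext h) hb
        · exact h
      rw [hσ b hb', hpos, id, sub_self, abs_zero]
    · intro h; exact absurd (Finset.mem_univ _) h
  · rw [hcost]; ring_nf; linarith [le_refl (0:ℝ)]
end

section
/- Let σ be an opposite request sequence for GRDY on a line with servers s₁ < ⋯ < s_k (capacity 1) whose characteristic permutation is a single cycle with tour T_σ. Then OPT(σ) ≥ (d_min/2)·|cs(σ)|, where d_min = min_j (s_{j+1} − s_j) and cs(σ) is the set of consuming pairs of σ (pairs of requests whose OPT-servers form a conflicting pair in T_σ). -/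
private lemma tele_aux {k : ℕ} (s : Fin k → ℝ) (hs : StrictMono s) (d : ℝ)
    (hd : ∀ (i : Fin k) (h : (i : ℕ) + 1 < k), d ≤ s ⟨(i : ℕ) + 1, h⟩ - s i) :
    ∀ (n : ℕ) (t t' : Fin k), (t : ℕ) + n ≤ (t' : ℕ) → (n : ℝ) * d ≤ s t' - s t := by
  intro n
  induction n with
  | zero =>
    intro t t' h
    have ht : t ≤ t' := Fin.le_def.mpr (by omega)
    have := hs.monotone ht
    simp only [Nat.cast_zero, zero_mul]
    linarith
  | succ n ih =>
    intro t t' h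
    have h1 : (t : ℕ) + 1 < k := lt_of_le_of_lt (by omega) t'.isLt
    have h2 := ih ⟨(t : ℕ) + 1, h1⟩ t' (show (t : ℕ) + 1 + n ≤ (t' : ℕ) by omega)
    have h3 := hd t h1
    push_cast
    linarith

private lemma exists_low {k : ℕ} (A : Finset (Fin k)) (hA : A.Nonempty) (B : ℕ)
    (hB : ∀ x ∈ A, (x : ℕ) < B) : ∃ x ∈ A, (x : ℕ) + A.card ≤ B := by
  have hsub : A.image Fin.val ⊆ Finset.Ico ((A.min' hA : Fin k) : ℕ) B := by
    intro y hy
    simp only [Finset.mem_image] at hy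
    obtain ⟨x, hx, rfl⟩ := hy
    exact Finset.mem_Ico.mpr ⟨A.min'_le x hx, hB x hx⟩
  have hcard : A.card ≤ B - ((A.min' hA : Fin k) : ℕ) := by
    have h := Finset.card_le_card hsub
    rwa [Finset.card_image_of_injective _ Fin.val_injective, Nat.card_Ico] at h
  refine ⟨A.min' hA, A.min'_mem hA, ?_⟩
  have := hB _ (A.min'_mem hA)
  omega

private lemma exists_high {k : ℕ} (A : Finset (Fin k)) (hA : A.Nonempty) (B : ℕ)
    (hB : ∀ x ∈ A, B < (x : ℕ)) : ∃ x ∈ A, B + A.card ≤ (x : ℕ) := by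
  have hsub : A.image Fin.val ⊆ Finset.Ioc B ((A.max' hA : Fin k) : ℕ) := by
    intro y hy
    simp only [Finset.mem_image] at hy
    obtain ⟨x, hx, rfl⟩ := hy
    exact Finset.mem_Ioc.mpr ⟨hB x hx, A.le_max' x hx⟩
  have hcard : A.card ≤ ((A.max' hA : Fin k) : ℕ) - B := by
    have h := Finset.card_le_card hsub
    rwa [Finset.card_image_of_injective _ Fin.val_injective, Nat.card_Ioc] at h
  refine ⟨A.max' hA, A.max'_mem hA, ?_⟩
  have := hB _ (A.max'_mem hA)
  omega



/-- Lemma on consuming pairs for GRDY on a line: let `s 0 < ⋯ < s (k-1)` be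
`k ≥ 2` capacity-1 servers, `σ` an opposite request sequence w.r.t. GRDY whose
characteristic permutation `π` (with `π (o i) = g i`, where `g` is GRDY's
assignment and `o` an optimal assignment) is a single cycle on all servers.
Then `OPT(σ) ≥ (d_min / 2) · |cs(σ)|`, where `d_min = min_j (s (j+1) − s j)`
and `cs(σ)` is the set of consuming pairs `(rᵢ, rⱼ)`, i.e. those pairs whose
OPT-servers form a conflicting pair in the tour:
`s (o i) ≤ s (g j) < s (g i) ≤ s (o j)`. -/
theorem stmt_16 (k : ℕ) (hk : 2 ≤ k) (s : Fin k → ℝ) (hs : StrictMono s)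
    (σ : Fin k → ℝ) (g o : Fin k → Fin k)
    -- `g` is GRDY's assignment: free, nearest, ties to the largest index
    (hgfree : ∀ i j : Fin k, j < i → g j ≠ g i)
    (hgnear : ∀ i t : Fin k, (∀ j, j < i → g j ≠ t) →
      |σ i - s (g i)| ≤ |σ i - s t|)
    (hgtie : ∀ i t : Fin k, (∀ j, j < i → g j ≠ t) →
      |σ i - s t| = |σ i - s (g i)| → t ≤ g i)
    -- `o` is an optimal (offline) assignment
    (ho : Function.Bijective o)
    (hoopt : ∀ f : Fin k → Fin k, Function.Bijective f →
      ∑ i, |σ i - s (o i)| ≤ ∑ i, |σ i - s (f i)|)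
    -- `σ` is opposite w.r.t. GRDY: each request lies between its two servers
    (hopp : ∀ i, (s (g i) ≤ σ i ∧ σ i ≤ s (o i)) ∨
      (s (o i) ≤ σ i ∧ σ i ≤ s (g i)))
    -- the characteristic permutation is a single tour on all the servers
    (π : Equiv.Perm (Fin k)) (hπ : ∀ i, π (o i) = g i)
    (hcyc : ∀ x y : Fin k, ∃ m : ℕ, (π ^ m) x = y) :
    (sInf {d : ℝ | ∃ i : Fin k, ∃ h : (i : ℕ) + 1 < k,
        d = s ⟨(i : ℕ) + 1, h⟩ - s i} / 2) *
      (Nat.card {p : Fin k × Fin k // s (o p.1) ≤ s (g p.2) ∧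
        s (g p.2) < s (g p.1) ∧ s (g p.1) ≤ s (o p.2)} : ℝ) ≤
    ∑ i, |σ i - s (o i)| := by
  classical
  have hginj : Function.Injective g := by
    intro a b hab
    by_contra hne
    rcases lt_or_gt_of_ne hne with h | h
    · exact hgfree b a h hab
    · exact hgfree a b h hab.symm
  set d : ℝ := sInf {d : ℝ | ∃ i : Fin k, ∃ h : (i : ℕ) + 1 < k,
      d = s ⟨(i : ℕ) + 1, h⟩ - s i} with hd
  have hd_le : ∀ (i : Fin k) (h : (i : ℕ) + 1 < k), d ≤ s ⟨(i : ℕ) + 1, h⟩ - s i := by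
    intro i h
    apply csInf_le
    · refine ⟨0, ?_⟩
      rintro x ⟨i, hi, rfl⟩
      have hlt : s i < s ⟨(i : ℕ) + 1, hi⟩ := hs (by simp [Fin.lt_def])
      linarith
    · exact ⟨i, h, rfl⟩
  -- per-pair bounds
  have pairA : ∀ u j : Fin k, u < j → s (o u) ≤ s (g j) → s (g j) < s (g u) →
      s (g u) - s (g j) ≤ 2 * |σ u - s (o u)| := by
    intro u j huj h1 h2
    have hfree : ∀ j', j' < u → g j' ≠ g j := by
      intro j' hj' he
      have hjj : j' = j := hginj he
      rw [hjj] at hj'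
      exact absurd (hj'.trans huj) (lt_irrefl j)
    have hnear := hgnear u (g j) hfree
    have hσ : s (o u) ≤ σ u ∧ σ u ≤ s (g u) := by
      rcases hopp u with h | h
      · exact ⟨by linarith [h.1, h.2], by linarith [h.1, h.2]⟩
      · exact h
    obtain ⟨hσ1, hσ2⟩ := hσ
    rw [abs_of_nonpos (by linarith : σ u - s (g u) ≤ 0)] at hnear
    rcases le_or_gt (s (g j)) (σ u) with hc | hc
    · rw [abs_of_nonneg (by linarith : (0:ℝ) ≤ σ u - s (g j))] at hnear
      rw [abs_of_nonneg (by linarith : (0:ℝ) ≤ σ u - s (o u))]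
      linarith
    · rw [abs_of_neg (by linarith : σ u - s (g j) < 0)] at hnear
      linarith
  have pairB : ∀ u i : Fin k, u < i → s (g u) < s (g i) → s (g i) ≤ s (o u) →
      s (g i) - s (g u) ≤ 2 * |σ u - s (o u)| := by
    intro u i hui h2 h3
    have hfree : ∀ j', j' < u → g j' ≠ g i := by
      intro j' hj' he
      have hjj : j' = i := hginj he
      rw [hjj] at hj'
      exact absurd (hj'.trans hui) (lt_irrefl i)
    have hnear := hgnear u (g i) hfree
    have hσ : s (g u) ≤ σ u ∧ σ u ≤ s (o u) := by
      rcases hopp u with h | h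
      · exact h
      · exact ⟨by linarith [h.1, h.2], by linarith [h.1, h.2]⟩
    obtain ⟨hσ1, hσ2⟩ := hσ
    rw [abs_of_nonneg (by linarith : (0:ℝ) ≤ σ u - s (g u))] at hnear
    rcases le_or_gt (σ u) (s (g i)) with hc | hc
    · rw [abs_of_nonpos (by linarith : σ u - s (g i) ≤ 0)] at hnear
      rw [abs_of_nonpos (by linarith : σ u - s (o u) ≤ 0)]
      linarith
    · rw [abs_of_pos (by linarith : (0:ℝ) < σ u - s (g i))] at hnear
      linarith
  set F : Finset (Fin k × Fin k) := Finset.univ.filter (fun p : Fin k × Fin k =>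
    s (o p.1) ≤ s (g p.2) ∧ s (g p.2) < s (g p.1) ∧ s (g p.1) ≤ s (o p.2)) with hF
  have hmemF : ∀ p : Fin k × Fin k, p ∈ F ↔
      (s (o p.1) ≤ s (g p.2) ∧ s (g p.2) < s (g p.1) ∧ s (g p.1) ≤ s (o p.2)) := by
    intro p
    simp [hF]
  -- the charging lemma
  have hcharge : ∀ u : Fin k,
      ((F.filter (fun p => (if p.1 < p.2 then p.1 else p.2) = u)).card : ℝ) * d
        ≤ 2 * |σ u - s (o u)| := by
    intro u
    set T := F.filter (fun p => (if p.1 < p.2 then p.1 else p.2) = u) with hT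
    have hmem : ∀ p ∈ T, (s (o p.1) ≤ s (g p.2) ∧ s (g p.2) < s (g p.1) ∧
        s (g p.1) ≤ s (o p.2)) ∧ (if p.1 < p.2 then p.1 else p.2) = u := by
      intro p hp
      rw [hT, Finset.mem_filter] at hp
      exact ⟨(hmemF p).mp hp.1, hp.2⟩
    rcases T.eq_empty_or_nonempty with h0 | ⟨p0, hp0⟩
    · rw [h0]
      simp
    · obtain ⟨⟨q01, q02, q03⟩, he0⟩ := hmem p0 hp0
      have hne0 : p0.1 ≠ p0.2 := by
        intro h; rw [h] at q02; exact lt_irrefl _ q02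
      rcases lt_or_gt_of_ne hne0 with h12 | h21
      · -- type A : u = p0.1, s (o u) < s (g u)
        have hu : p0.1 = u := by rw [if_pos h12] at he0; exact he0
        have hogu : s (o u) < s (g u) := by
          rw [← hu]; exact lt_of_le_of_lt q01 q02
        have hall : ∀ p ∈ T, p.1 = u ∧ u < p.2 := by
          intro p hp
          obtain ⟨⟨q1, q2, q3⟩, heu⟩ := hmem p hp
          have hnep : p.1 ≠ p.2 := by
            intro h; rw [h] at q2; exact lt_irrefl _ q2
          rcases lt_or_gt_of_ne hnep with h | h
          · rw [if_pos h] at heu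
            exact ⟨heu, heu ▸ h⟩
          · rw [if_neg (not_lt.mpr h.le)] at heu
            rw [heu] at q2 q3
            exact absurd hogu (by push_neg; linarith)
        set A := T.image (fun p => g p.2) with hA
        have hcardA : A.card = T.card := Finset.card_image_of_injOn (by
          intro p hp q hq hpq
          have h1 := (hall p hp).1
          have h2 := (hall q hq).1
          have h3 := hginj hpq
          exact Prod.ext (h1.trans h2.symm) h3)
        have hAne : A.Nonempty := ⟨g p0.2, Finset.mem_image_of_mem _ hp0⟩
        have hbelow : ∀ x ∈ A, (x : ℕ) < (g u : ℕ) := by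
          intro x hx
          obtain ⟨p, hp, rfl⟩ := Finset.mem_image.mp hx
          obtain ⟨⟨q1, q2, q3⟩, _⟩ := hmem p hp
          rw [(hall p hp).1] at q2
          exact hs.lt_iff_lt.mp q2
        obtain ⟨x, hxA, hxle⟩ := exists_low A hAne (g u : ℕ) hbelow
        obtain ⟨p, hp, hgp⟩ := Finset.mem_image.mp hxA
        obtain ⟨⟨q1, q2, q3⟩, _⟩ := hmem p hp
        obtain ⟨h1u, hup2⟩ := hall p hp
        rw [h1u] at q1 q2
        have hb := pairA u p.2 hup2 q1 q2
        have ht := tele_aux s hs d hd_le A.card (g p.2) (g u)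
          (by rw [hgp]; exact hxle)
        rw [← hcardA]
        linarith
      · -- type B : u = p0.2, s (g u) < s (o u)
        have hu : p0.2 = u := by rw [if_neg (not_lt.mpr h21.le)] at he0; exact he0
        have hogu : s (g u) < s (o u) := by
          rw [← hu]; exact lt_of_lt_of_le q02 q03
        have hall : ∀ p ∈ T, p.2 = u ∧ u < p.1 := by
          intro p hp
          obtain ⟨⟨q1, q2, q3⟩, heu⟩ := hmem p hp
          have hnep : p.1 ≠ p.2 := by
            intro h; rw [h] at q2; exact lt_irrefl _ q2
          rcases lt_or_gt_of_ne hnep with h | h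
          · rw [if_pos h] at heu
            rw [heu] at q1 q2
            exact absurd hogu (by push_neg; linarith)
          · rw [if_neg (not_lt.mpr h.le)] at heu
            exact ⟨heu, heu ▸ h⟩
        set A := T.image (fun p => g p.1) with hA
        have hcardA : A.card = T.card := Finset.card_image_of_injOn (by
          intro p hp q hq hpq
          have h1 := (hall p hp).1
          have h2 := (hall q hq).1
          have h3 := hginj hpq
          exact Prod.ext h3 (h1.trans h2.symm))
        have hAne : A.Nonempty := ⟨g p0.1, Finset.mem_image_of_mem _ hp0⟩
        have habove : ∀ x ∈ A, (g u : ℕ) < (x : ℕ) := by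
          intro x hx
          obtain ⟨p, hp, rfl⟩ := Finset.mem_image.mp hx
          obtain ⟨⟨q1, q2, q3⟩, _⟩ := hmem p hp
          rw [(hall p hp).1] at q2
          exact hs.lt_iff_lt.mp q2
        obtain ⟨x, hxA, hxle⟩ := exists_high A hAne (g u : ℕ) habove
        obtain ⟨p, hp, hgp⟩ := Finset.mem_image.mp hxA
        obtain ⟨⟨q1, q2, q3⟩, _⟩ := hmem p hp
        obtain ⟨h2u, hup1⟩ := hall p hp
        rw [h2u] at q2 q3
        have hb := pairB u p.1 hup1 q2 q3
        have ht := tele_aux s hs d hd_le A.card (g u) (g p.1)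
          (by rw [hgp]; exact hxle)
        rw [← hcardA]
        linarith
  -- assemble
  have hcard : (Nat.card {p : Fin k × Fin k // s (o p.1) ≤ s (g p.2) ∧
      s (g p.2) < s (g p.1) ∧ s (g p.1) ≤ s (o p.2)}) = F.card := by
    rw [Nat.card_eq_fintype_card, Fintype.card_subtype]
  rw [hcard]
  have hfib : F.card = ∑ u : Fin k,
      (F.filter (fun p => (if p.1 < p.2 then p.1 else p.2) = u)).card :=
    Finset.card_eq_sum_card_fiberwise (fun p _ => Finset.mem_univ _)
  rw [hfib]
  push_cast
  rw [Finset.mul_sum]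
  apply Finset.sum_le_sum
  intro u _
  have hch := hcharge u
  linarith
end
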